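/- For abelian groups A₁ and A₂, there is an isomorphism Γ₂(A₁ ⊕ A₂) ≅ Γ₂(A₁) ⊕ Γ₂(A₂) ⊕ (A₁ ⊗ A₂). -/

import Mathlib

/-- The subgroup of relations defining Whitehead's universal quadratic functor `Γ₂`. -/
def gammaRels (A : Type) [AddCommGroup A] : AddSubgroup (FreeAbelianGroup A) :=
  AddSubgroup.closure
    ({x | ∃ a : A, x = FreeAbelianGroup.of (-a) - FreeAbelianGroup.of a} ∪
     {x | ∃ a b c : A,
        x = FreeAbelianGroup.of (a + b + c) - FreeAbelianGroup.of (a + b)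
          - FreeAbelianGroup.of (b + c) - FreeAbelianGroup.of (a + c)
          + FreeAbelianGroup.of a + FreeAbelianGroup.of b + FreeAbelianGroup.of c})

/-- Whitehead's universal quadratic group `Γ₂(A)`: generated by symbols `γ(x)`, `x ∈ A`,
subject to `γ(-x) = γ(x)` and
`γ(x+y+z) - γ(x+y) - γ(y+z) - γ(x+z) + γ(x) + γ(y) + γ(z) = 0`. -/
def Gamma2 (A : Type) [AddCommGroup A] : Type := FreeAbelianGroup A ⧸ gammaRels A

instance (A : Type) [AddCommGroup A] : AddCommGroup (Gamma2 A) :=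
  inferInstanceAs (AddCommGroup (FreeAbelianGroup A ⧸ gammaRels A))

/-- The canonical generator `γ(a) ∈ Γ₂(A)`. -/
def gamma {A : Type} [AddCommGroup A] (a : A) : Gamma2 A :=
  QuotientAddGroup.mk (FreeAbelianGroup.of a)

section aux

variable {A M : Type} [AddCommGroup A] [AddCommGroup M]

lemma gamma_neg (a : A) : gamma (-a) = gamma a := by
  rw [← sub_eq_zero]
  show QuotientAddGroup.mk (FreeAbelianGroup.of (-a) - FreeAbelianGroup.of a) = 0
  rw [QuotientAddGroup.eq_zero_iff]
  exact AddSubgroup.subset_closure (Or.inl ⟨a, rfl⟩)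

lemma gamma_cube (a b c : A) :
    gamma (a + b + c) - gamma (a + b) - gamma (b + c) - gamma (a + c)
      + gamma a + gamma b + gamma c = 0 := by
  show QuotientAddGroup.mk (FreeAbelianGroup.of (a + b + c) - FreeAbelianGroup.of (a + b)
          - FreeAbelianGroup.of (b + c) - FreeAbelianGroup.of (a + c)
          + FreeAbelianGroup.of a + FreeAbelianGroup.of b + FreeAbelianGroup.of c) = 0
  rw [QuotientAddGroup.eq_zero_iff]
  exact AddSubgroup.subset_closure (Or.inr ⟨a, b, c, rfl⟩)

lemma gamma_zero : gamma (0 : A) = 0 := by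
  have := gamma_cube (0 : A) 0 0
  simpa using this

private lemma solve_cube {x y z w u v t : M}
    (h : x - y - z - w + u + v + t = 0) : x = y + z + w - u - v - t := by
  have h2 : x - (y + z + w - u - v - t) = x - y - z - w + u + v + t := by abel
  rw [← sub_eq_zero, h2, h]

lemma gamma_add_add (a b c : A) :
    gamma (a + b + c) = gamma (a + b) + gamma (b + c) + gamma (a + c)
      - gamma a - gamma b - gamma c :=
  solve_cube (gamma_cube a b c)

/-- Lift a function satisfying the Γ₂ relations to a homomorphism on `Gamma2 A`. -/
def Gamma2.lift (φ : A → M)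
    (h1 : ∀ a, φ (-a) = φ a)
    (h2 : ∀ a b c, φ (a + b + c) - φ (a + b) - φ (b + c) - φ (a + c) + φ a + φ b + φ c = 0) :
    Gamma2 A →+ M :=
  QuotientAddGroup.lift _ (FreeAbelianGroup.lift φ) (by
    intro x hx
    refine (AddSubgroup.closure_le ((FreeAbelianGroup.lift φ).ker)).mpr ?_ hx
    rintro y (⟨a, rfl⟩ | ⟨a, b, c, rfl⟩) <;>
      simp [AddMonoidHom.mem_ker, h1, h2, sub_eq_zero])

@[simp] lemma Gamma2.lift_gamma (φ : A → M) (h1) (h2) (a : A) :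
    Gamma2.lift φ h1 h2 (gamma a) = φ a := by
  show QuotientAddGroup.lift _ (FreeAbelianGroup.lift φ) _ (QuotientAddGroup.mk _) = φ a
  rw [QuotientAddGroup.lift_mk, FreeAbelianGroup.lift_apply_of]

lemma Gamma2.hom_ext {f g : Gamma2 A →+ M}
    (h : ∀ a, f (gamma a) = g (gamma a)) : f = g := by
  apply QuotientAddGroup.addMonoidHom_ext
  exact FreeAbelianGroup.lift_ext _ _ h

end aux

open TensorProduct

/-- For abelian groups `A₁`, `A₂`, there is an isomorphism
`Γ₂(A₁ ⊕ A₂) ≅ Γ₂(A₁) ⊕ Γ₂(A₂) ⊕ (A₁ ⊗ A₂)`. -/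
theorem gamma2_prod (A₁ A₂ : Type) [AddCommGroup A₁] [AddCommGroup A₂] :
    Nonempty (Gamma2 (A₁ × A₂) ≃+ (Gamma2 A₁ × Gamma2 A₂ × TensorProduct ℤ A₁ A₂)) := by
  set T := TensorProduct ℤ A₁ A₂ with hT
  -- forward map
  set φ : A₁ × A₂ → Gamma2 A₁ × Gamma2 A₂ × T :=
    fun p => (gamma p.1, gamma p.2, p.1 ⊗ₜ[ℤ] p.2) with hφ
  have hφ1 : ∀ p : A₁ × A₂, φ (-p) = φ p := by
    rintro ⟨a, b⟩
    simp [hφ, gamma_neg, TensorProduct.neg_tmul, TensorProduct.tmul_neg]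
  have hφ2 : ∀ p q r : A₁ × A₂,
      φ (p + q + r) - φ (p + q) - φ (q + r) - φ (p + r) + φ p + φ q + φ r = 0 := by
    rintro ⟨a₁, a₂⟩ ⟨b₁, b₂⟩ ⟨c₁, c₂⟩
    refine Prod.ext_iff.mpr ⟨?_, Prod.ext_iff.mpr ⟨?_, ?_⟩⟩
    · show gamma (a₁ + b₁ + c₁) - gamma (a₁ + b₁) - gamma (b₁ + c₁) - gamma (a₁ + c₁)
        + gamma a₁ + gamma b₁ + gamma c₁ = 0
      exact gamma_cube _ _ _
    · show gamma (a₂ + b₂ + c₂) - gamma (a₂ + b₂) - gamma (b₂ + c₂) - gamma (a₂ + c₂)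
        + gamma a₂ + gamma b₂ + gamma c₂ = 0
      exact gamma_cube _ _ _
    · show ((a₁ + b₁ + c₁) ⊗ₜ[ℤ] (a₂ + b₂ + c₂) : T)
        - (a₁ + b₁) ⊗ₜ[ℤ] (a₂ + b₂) - (b₁ + c₁) ⊗ₜ[ℤ] (b₂ + c₂)
        - (a₁ + c₁) ⊗ₜ[ℤ] (a₂ + c₂)
        + a₁ ⊗ₜ[ℤ] a₂ + b₁ ⊗ₜ[ℤ] b₂ + c₁ ⊗ₜ[ℤ] c₂ = 0
      simp only [TensorProduct.add_tmul, TensorProduct.tmul_add]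
      abel
  set f : Gamma2 (A₁ × A₂) →+ Gamma2 A₁ × Gamma2 A₂ × T := Gamma2.lift φ hφ1 hφ2 with hf
  -- backward maps
  set e₁ : Gamma2 A₁ →+ Gamma2 (A₁ × A₂) :=
    Gamma2.lift (fun a => gamma (a, 0))
      (fun a => by
        show gamma ((-a, 0) : A₁ × A₂) = gamma (a, 0)
        rw [show ((-a, 0) : A₁ × A₂) = -(a, 0) by simp, gamma_neg])
      (fun a b c => by
        have := gamma_cube ((a, 0) : A₁ × A₂) (b, 0) (c, 0)
        simpa using this) with he₁
  set e₂ : Gamma2 A₂ →+ Gamma2 (A₁ × A₂) :=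
    Gamma2.lift (fun b => gamma (0, b))
      (fun a => by
        show gamma ((0, -a) : A₁ × A₂) = gamma (0, a)
        rw [show ((0, -a) : A₁ × A₂) = -(0, a) by simp, gamma_neg])
      (fun a b c => by
        have := gamma_cube ((0, a) : A₁ × A₂) (0, b) (0, c)
        simpa using this) with he₂
  set β : A₁ →+ A₂ →+ Gamma2 (A₁ × A₂) :=
    AddMonoidHom.mk'
      (fun a => AddMonoidHom.mk' (fun b => gamma (a, b) - gamma (a, 0) - gamma (0, b))
        (fun b b' => by
          have h := gamma_add_add ((a, 0) : A₁ × A₂) (0, b) (0, b')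
          simp only [Prod.mk_add_mk, add_zero, zero_add] at h
          show gamma (a, b + b') - gamma (a, 0) - gamma (0, b + b')
            = (gamma (a, b) - gamma (a, 0) - gamma (0, b))
              + (gamma (a, b') - gamma (a, 0) - gamma (0, b'))
          rw [h]; abel))
      (fun a a' => by
        ext b
        have h := gamma_add_add ((a, 0) : A₁ × A₂) (a', 0) (0, b)
        simp only [Prod.mk_add_mk, add_zero, zero_add] at h
        simp only [AddMonoidHom.mk'_apply, AddMonoidHom.add_apply]
        rw [h]; abel) with hβ
  set e₃ : T →+ Gamma2 (A₁ × A₂) :=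
    TensorProduct.liftAddHom β
      (fun r m n => by
        show β.flip n (r • m) = β m (r • n)
        rw [map_zsmul, map_zsmul, AddMonoidHom.flip_apply]) with he₃
  set g : (Gamma2 A₁ × Gamma2 A₂ × T) →+ Gamma2 (A₁ × A₂) :=
    AddMonoidHom.mk' (fun p => e₁ p.1 + e₂ p.2.1 + e₃ p.2.2)
      (fun p q => by
        simp only [Prod.fst_add, Prod.snd_add, map_add]
        abel) with hg
  -- the composites
  have hβapp : ∀ (a : A₁) (b : A₂),
      β a b = gamma ((a, b) : A₁ × A₂) - gamma (a, 0) - gamma (0, b) := fun a b => rfl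
  have hgf : ∀ x, g (f x) = x := by
    have : g.comp f = AddMonoidHom.id _ := by
      apply Gamma2.hom_ext
      rintro ⟨a, b⟩
      show g (f (gamma (a, b))) = gamma (a, b)
      rw [hf, Gamma2.lift_gamma]
      show e₁ (gamma a) + e₂ (gamma b) + e₃ (a ⊗ₜ[ℤ] b) = gamma (a, b)
      rw [he₁, he₂, Gamma2.lift_gamma, Gamma2.lift_gamma, he₃,
        TensorProduct.liftAddHom_tmul, hβapp]
      abel
    intro x; exact DFunLike.congr_fun this x
  have h1 : ∀ x, f (e₁ x) = (x, 0, 0) := by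
    have : f.comp e₁ = (AddMonoidHom.inl (Gamma2 A₁) (Gamma2 A₂ × T)) := by
      apply Gamma2.hom_ext
      intro a
      show f (e₁ (gamma a)) = (gamma a, 0, 0)
      rw [he₁, Gamma2.lift_gamma, hf, Gamma2.lift_gamma]
      show (gamma a, gamma (0 : A₂), a ⊗ₜ[ℤ] (0 : A₂)) = (gamma a, 0, 0)
      rw [gamma_zero, TensorProduct.tmul_zero]
    intro x; exact DFunLike.congr_fun this x
  have h2 : ∀ y, f (e₂ y) = (0, y, 0) := by
    have : f.comp e₂ = (AddMonoidHom.inr (Gamma2 A₁) (Gamma2 A₂ × T)).comp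
        (AddMonoidHom.inl (Gamma2 A₂) T) := by
      apply Gamma2.hom_ext
      intro b
      show f (e₂ (gamma b)) = (0, gamma b, 0)
      rw [he₂, Gamma2.lift_gamma, hf, Gamma2.lift_gamma]
      show (gamma (0 : A₁), gamma b, (0 : A₁) ⊗ₜ[ℤ] b) = (0, gamma b, 0)
      rw [gamma_zero, TensorProduct.zero_tmul]
    intro y; exact DFunLike.congr_fun this y
  have h3 : ∀ t : T, f (e₃ t) = (0, 0, t) := by
    intro t
    induction t using TensorProduct.induction_on with
    | zero => simp; rfl
    | tmul a b =>
      have he : e₃ (a ⊗ₜ[ℤ] b)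
          = gamma ((a, b) : A₁ × A₂) - gamma (a, 0) - gamma (0, b) := by
        rw [he₃, TensorProduct.liftAddHom_tmul, hβapp]
      rw [he, map_sub, map_sub, hf, Gamma2.lift_gamma, Gamma2.lift_gamma, Gamma2.lift_gamma]
      show ((gamma a, gamma b, a ⊗ₜ[ℤ] b) : Gamma2 A₁ × Gamma2 A₂ × T)
          - (gamma a, gamma (0 : A₂), a ⊗ₜ[ℤ] (0 : A₂))
          - (gamma (0 : A₁), gamma b, (0 : A₁) ⊗ₜ[ℤ] b) = (0, 0, a ⊗ₜ[ℤ] b)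
      rw [gamma_zero, gamma_zero, TensorProduct.tmul_zero, TensorProduct.zero_tmul]
      refine Prod.ext_iff.mpr ⟨?_, Prod.ext_iff.mpr ⟨?_, ?_⟩⟩ <;> simp
    | add x y hx hy =>
      rw [map_add, map_add, hx, hy]
      refine Prod.ext_iff.mpr ⟨?_, Prod.ext_iff.mpr ⟨?_, ?_⟩⟩ <;> simp
  have hfg : ∀ p, f (g p) = p := by
    rintro ⟨x, y, t⟩
    show f (e₁ x + e₂ y + e₃ t) = (x, y, t)
    rw [map_add, map_add, h1 x, h2 y, h3 t]
    refine Prod.ext_iff.mpr ⟨?_, Prod.ext_iff.mpr ⟨?_, ?_⟩⟩ <;> simp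
  exact ⟨{ toFun := f, invFun := g, left_inv := hgf, right_inv := hfg,
           map_add' := map_add f }⟩
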